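/- With unreliable sensors, each flipping its reading independently with probability p < 1/2, if r_s(n) = Θ((log n)/n), then there exists ε(n) = Θ((log n)/n) such that, using the majority rule within each interval of length (c log n)/n to declare presence or absence of a transmitter, P(1 - A_void ≤ ε(n)) → 1 as n → ∞. -/

import Mathlib

open MeasureTheory ProbabilityTheory Filter Set
open scoped Classical
open scoped ENNReal

lemma aux_pow_ineq {p : ℝ} (hp0 : 0 < p) (hp : p < 1/2) (N1 N2 : ℕ) (hN : N2 ≤ N1) :
    p ^ N1 * (1 - p) ^ N2 ≤ Real.sqrt (p * (1 - p)) ^ (N1 + N2) := by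
  set s := Real.sqrt (p * (1 - p)) with hs
  have hp1 : (0:ℝ) ≤ 1 - p := by linarith
  have hs0 : 0 ≤ s := Real.sqrt_nonneg _
  have hsq : s ^ 2 = p * (1 - p) := Real.sq_sqrt (by positivity)
  have hps : p ≤ s := by
    rw [hs, Real.le_sqrt hp0.le (by positivity)]
    nlinarith
  obtain ⟨d, hd⟩ : ∃ d, N1 = N2 + d := ⟨N1 - N2, (Nat.add_sub_cancel' hN).symm⟩
  subst hd
  calc p ^ (N2 + d) * (1 - p) ^ N2 = (p * (1 - p)) ^ N2 * p ^ d := by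
        rw [mul_pow, pow_add]; ring
    _ ≤ (p * (1 - p)) ^ N2 * s ^ d :=
        mul_le_mul_of_nonneg_left (pow_le_pow_left₀ hp0.le hps d) (by positivity)
    _ = s ^ (N2 + d + N2) := by rw [← hsq, ← pow_mul, ← pow_add]; congr 1; omega

lemma core_bound {Ω : Type*} [MeasurableSpace Ω] (P : Measure Ω) [IsProbabilityMeasure P]
    {n : ℕ} (X : Fin n → Ω → ℝ) (F : Fin n → Ω → Bool)
    (hXmeas : ∀ i, Measurable (X i)) (hFmeas : ∀ i, Measurable (F i))
    (p : ℝ) (hp0 : 0 < p) (hp : p < 1/2)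
    (hflip : ∀ i, P {ω | F i ω = true} = ENNReal.ofReal p)
    (hXF : ∀ i, IndepFun (X i) (F i) P)
    (hindep : iIndepFun (fun i => fun ω => (X i ω, F i ω)) P)
    (I : Set ℝ) (hI : MeasurableSet I)
    (q : ℝ) (hq0 : 0 ≤ q) (hq1 : q ≤ 1)
    (hqI : ∀ i, P (X i ⁻¹' I) = ENNReal.ofReal q) :
    P {ω | ((Finset.univ.filter fun i => X i ω ∈ I ∧ F i ω = true).card
          > (Finset.univ.filter fun i => X i ω ∈ I ∧ ¬ (F i ω = true)).card)}
      ≤ ENNReal.ofReal ((1 - q * (1 - 2 * Real.sqrt (p * (1 - p)))) ^ n) := by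
  set s := Real.sqrt (p * (1 - p)) with hsdef
  have hp1 : (0:ℝ) ≤ 1 - p := by linarith
  have hs0 : 0 ≤ s := Real.sqrt_nonneg _
  have hq1' : (0:ℝ) ≤ 1 - q := by linarith
  set w : Fin 3 → ℝ := ![1 - q, q * p, q * (1 - p)] with hw
  set w' : Fin 3 → ℝ := ![1 - q, q * s, q * s] with hw'
  have hwnn : ∀ v, 0 ≤ w v := by
    intro v
    fin_cases v
    · show (0:ℝ) ≤ 1 - q
      exact hq1'
    · show (0:ℝ) ≤ q * p
      exact mul_nonneg hq0 hp0.le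
    · show (0:ℝ) ≤ q * (1 - p)
      exact mul_nonneg hq0 hp1
  set S : Fin 3 → Set (ℝ × Bool) :=
    ![(Iᶜ) ×ˢ (Set.univ : Set Bool), I ×ˢ {true}, I ×ˢ {false}] with hS
  have hSmeas : ∀ v, MeasurableSet (S v) := by
    intro v
    fin_cases v
    · exact hI.compl.prod MeasurableSet.univ
    · exact hI.prod (measurableSet_singleton _)
    · exact hI.prod (measurableSet_singleton _)
  have hFt : ∀ i, P (F i ⁻¹' {true}) = ENNReal.ofReal p := fun i => hflip i
  have hFf : ∀ i, P (F i ⁻¹' {false}) = ENNReal.ofReal (1 - p) := by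
    intro i
    have hpre : F i ⁻¹' {false} = (F i ⁻¹' {true})ᶜ := by
      ext ω; simp
    rw [hpre, prob_compl_eq_one_sub (hFmeas i (measurableSet_singleton _)), hFt i,
      ← ENNReal.ofReal_one, ← ENNReal.ofReal_sub _ hp0.le]
  have hm : ∀ i v, P ((fun ω => (X i ω, F i ω)) ⁻¹' S v) = ENNReal.ofReal (w v) := by
    intro i v
    fin_cases v
    · show P ((fun ω => (X i ω, F i ω)) ⁻¹' ((Iᶜ) ×ˢ (Set.univ : Set Bool)))
          = ENNReal.ofReal (1 - q)
      rw [Set.mk_preimage_prod, Set.preimage_univ, Set.inter_univ, Set.preimage_compl,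
        prob_compl_eq_one_sub (hXmeas i hI), hqI i,
        ← ENNReal.ofReal_one, ← ENNReal.ofReal_sub _ hq0]
    · show P ((fun ω => (X i ω, F i ω)) ⁻¹' (I ×ˢ ({true} : Set Bool)))
          = ENNReal.ofReal (q * p)
      rw [Set.mk_preimage_prod,
        (hXF i).measure_inter_preimage_eq_mul I {true} hI (measurableSet_singleton _),
        hqI i, hFt i, ← ENNReal.ofReal_mul hq0]
    · show P ((fun ω => (X i ω, F i ω)) ⁻¹' (I ×ˢ ({false} : Set Bool)))
          = ENNReal.ofReal (q * (1 - p))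
      rw [Set.mk_preimage_prod,
        (hXF i).measure_inter_preimage_eq_mul I {false} hI (measurableSet_singleton _),
        hqI i, hFf i, ← ENNReal.ofReal_mul hq0]
  set A : (Fin n → Fin 3) → Set Ω :=
    fun f => ⋂ i, (fun ω => (X i ω, F i ω)) ⁻¹' S (f i) with hA
  set V : Finset (Fin n → Fin 3) :=
    Finset.univ.filter (fun f => (Finset.univ.filter fun i => f i = 2).card ≤
      (Finset.univ.filter fun i => f i = 1).card) with hV
  have hcover : {ω | ((Finset.univ.filter fun i => X i ω ∈ I ∧ F i ω = true).card
          > (Finset.univ.filter fun i => X i ω ∈ I ∧ ¬ (F i ω = true)).card)}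
      ⊆ ⋃ f ∈ V, A f := by
    intro ω hω
    set f : Fin n → Fin 3 :=
      fun i => if X i ω ∈ I then (if F i ω = true then 1 else 2) else 0 with hf
    have hmem : ω ∈ A f := by
      simp only [hA, Set.mem_iInter]
      intro i
      by_cases h1 : X i ω ∈ I
      · by_cases h2 : F i ω = true
        · simp [hf, hS, h1, h2]
        · simp [hf, hS, h1, h2]
      · simp [hf, hS, h1]
    have h1eq : (Finset.univ.filter fun i => f i = 1)
        = (Finset.univ.filter fun i => X i ω ∈ I ∧ F i ω = true) := by
      apply Finset.filter_congr
      intro i _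
      by_cases h1 : X i ω ∈ I <;> by_cases h2 : F i ω = true <;>
        simp [hf, h1, h2]
    have h2eq : (Finset.univ.filter fun i => f i = 2)
        = (Finset.univ.filter fun i => X i ω ∈ I ∧ ¬ (F i ω = true)) := by
      apply Finset.filter_congr
      intro i _
      by_cases h1 : X i ω ∈ I <;> by_cases h2 : F i ω = true <;>
        simp [hf, h1, h2]
    have hfV : f ∈ V := by
      rw [hV, Finset.mem_filter]
      refine ⟨Finset.mem_univ f, ?_⟩
      rw [h1eq, h2eq]
      exact le_of_lt hω
    exact Set.mem_iUnion₂.mpr ⟨f, hfV, hmem⟩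
  have hkey : ∀ f ∈ V, (∏ i, w (f i)) ≤ ∏ i, w' (f i) := by
    intro f hf
    have hprod : ∀ u : Fin 3 → ℝ,
        (∏ i, u (f i)) = ∏ v : Fin 3, u v ^ (Finset.univ.filter fun i => f i = v).card := by
      intro u
      rw [Finset.prod_comp u f]
      refine Finset.prod_subset (Finset.subset_univ _) ?_
      intro v _ hv
      have h0 : (Finset.univ.filter fun i => f i = v) = ∅ := by
        rw [Finset.filter_eq_empty_iff]
        intro i _
        exact fun h => hv (h ▸ Finset.mem_image_of_mem f (Finset.mem_univ i))
      rw [h0]; simp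
    have hcard : (Finset.univ.filter fun i => f i = 2).card ≤
        (Finset.univ.filter fun i => f i = 1).card := by
      simpa [hV] using hf
    set N0 := (Finset.univ.filter fun i => f i = 0).card
    set N1 := (Finset.univ.filter fun i => f i = 1).card
    set N2 := (Finset.univ.filter fun i => f i = 2).card
    have haux := aux_pow_ineq hp0 hp N1 N2 hcard
    rw [hprod w, hprod w', Fin.prod_univ_three, Fin.prod_univ_three]
    simp only [hw, hw', Matrix.cons_val_zero, Matrix.cons_val_one, Matrix.head_cons,
      Matrix.cons_val_two, Matrix.tail_cons]
    calc (1 - q) ^ N0 * (q * p) ^ N1 * (q * (1 - p)) ^ N2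
        = ((1 - q) ^ N0 * q ^ (N1 + N2)) * (p ^ N1 * (1 - p) ^ N2) := by
          rw [pow_add, mul_pow, mul_pow]; ring
      _ ≤ ((1 - q) ^ N0 * q ^ (N1 + N2)) * s ^ (N1 + N2) := by
          refine mul_le_mul_of_nonneg_left haux ?_
          exact mul_nonneg (pow_nonneg hq1' _) (pow_nonneg hq0 _)
      _ = (1 - q) ^ N0 * (q * s) ^ N1 * (q * s) ^ N2 := by
          rw [pow_add, mul_pow, mul_pow]; ring
  have hw'nn : ∀ v, 0 ≤ w' v := by
    intro v
    fin_cases v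
    · show (0:ℝ) ≤ 1 - q
      exact hq1'
    · show (0:ℝ) ≤ q * s
      exact mul_nonneg hq0 hs0
    · show (0:ℝ) ≤ q * s
      exact mul_nonneg hq0 hs0
  calc P {ω | ((Finset.univ.filter fun i => X i ω ∈ I ∧ F i ω = true).card
          > (Finset.univ.filter fun i => X i ω ∈ I ∧ ¬ (F i ω = true)).card)}
      ≤ P (⋃ f ∈ V, A f) := measure_mono hcover
    _ ≤ ∑ f ∈ V, P (A f) := measure_biUnion_finset_le V A
    _ = ∑ f ∈ V, ENNReal.ofReal (∏ i, w (f i)) := by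
        refine Finset.sum_congr rfl fun f _ => ?_
        have h2 : A f = ⋂ i ∈ Finset.univ, (fun ω => (X i ω, F i ω)) ⁻¹' S (f i) := by
          ext ω; simp [hA]
        rw [h2, hindep.measure_inter_preimage_eq_mul Finset.univ
          (fun i _ => hSmeas (f i)),
          ENNReal.ofReal_prod_of_nonneg (fun i _ => hwnn (f i))]
        exact Finset.prod_congr rfl fun i _ => hm i (f i)
    _ ≤ ∑ f ∈ V, ENNReal.ofReal (∏ i, w' (f i)) :=
        Finset.sum_le_sum fun f hf => ENNReal.ofReal_le_ofReal (hkey f hf)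
    _ ≤ ∑ f : Fin n → Fin 3, ENNReal.ofReal (∏ i, w' (f i)) :=
        Finset.sum_le_sum_of_subset (Finset.filter_subset _ _)
    _ = ∑ f : Fin n → Fin 3, ∏ i, ENNReal.ofReal (w' (f i)) := by
        refine Finset.sum_congr rfl fun f _ => ?_
        rw [ENNReal.ofReal_prod_of_nonneg (fun i _ => hw'nn (f i))]
    _ = ∏ i : Fin n, ∑ v : Fin 3, ENNReal.ofReal (w' v) := by
        rw [Finset.prod_univ_sum (fun _ => Finset.univ) (fun _ v => ENNReal.ofReal (w' v)),
          Fintype.piFinset_univ]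
    _ = ENNReal.ofReal ((1 - q * (1 - 2 * s)) ^ n) := by
        rw [Finset.prod_const, Finset.card_univ, Fintype.card_fin]
        rw [Fin.sum_univ_three]
        simp only [hw', Matrix.cons_val_zero, Matrix.cons_val_one, Matrix.head_cons,
          Matrix.cons_val_two, Matrix.tail_cons]
        rw [← ENNReal.ofReal_add hq1' (by positivity),
          ← ENNReal.ofReal_add (by positivity) (by positivity),
          ← ENNReal.ofReal_pow (by positivity)]
        congr 1
        ring

/-- Whitespace recovery with unreliable sensors: each sensor's binary reading is
flipped independently with probability `p < 1/2`.  With radio range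
`r_s(n) = (c log n)/n` for a sufficiently large constant `c`, partitioning
`[0,1]` into intervals of length `(c log n)/n` and declaring an interval
occupied iff a majority of its sensors read `1`, there is
`ε(n) = C (log n)/n = Θ((log n)/n)` such that `P(1 - A_void ≤ ε(n)) → 1`,
where `A_void` is the total length of the intervals declared unoccupied. -/
theorem whitespace_recovery_unreliable
    {Ω : Type*} [MeasurableSpace Ω] (P : Measure Ω) [IsProbabilityMeasure P]
    (X : (n : ℕ) → Fin n → Ω → ℝ) (F : (n : ℕ) → Fin n → Ω → Bool)
    (hXmeas : ∀ n i, Measurable (X n i)) (hFmeas : ∀ n i, Measurable (F n i))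
    (hunif : ∀ n i, Measure.map (X n i) P = volume.restrict (Set.Icc (0:ℝ) 1))
    (p : ℝ) (hp0 : 0 < p) (hp : p < 1/2)
    (hflip : ∀ n i, P {ω | F n i ω = true} = ENNReal.ofReal p)
    (hXF : ∀ n i, IndepFun (X n i) (F n i) P)
    (hindep : ∀ n, iIndepFun
      (fun i : Fin n => fun ω => (X n i ω, F n i ω)) P)
    (M : ℕ) (t : Fin M → ℝ) (ht : ∀ j, t j ∈ Set.Icc (0:ℝ) 1) :
    ∃ c₀ : ℝ, 0 < c₀ ∧ ∀ c : ℝ, c₀ ≤ c →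
      ∃ C : ℝ, 0 < C ∧
        Tendsto
          (fun n : ℕ =>
            P {ω | 1 -
                (volume (⋃ k ∈ {k : ℕ | k < ⌈(n : ℝ) / (c * Real.log n)⌉₊ ∧
                    -- majority rule declares interval `k` unoccupied
                    ¬ ((Finset.univ.filter fun i : Fin n =>
                          X n i ω ∈ Set.Ico ((k : ℝ) * (c * Real.log n / n))
                              (((k : ℝ) + 1) * (c * Real.log n / n)) ∧
                          Xor' (∃ j, |X n i ω - t j| ≤ c * Real.log n / n)
                            (F n i ω = true)).card
                        > (Finset.univ.filter fun i : Fin n =>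
                          X n i ω ∈ Set.Ico ((k : ℝ) * (c * Real.log n / n))
                              (((k : ℝ) + 1) * (c * Real.log n / n)) ∧
                          ¬ Xor' (∃ j, |X n i ω - t j| ≤ c * Real.log n / n)
                            (F n i ω = true)).card)},
                  Set.Ico ((k : ℝ) * (c * Real.log n / n))
                      (((k : ℝ) + 1) * (c * Real.log n / n))
                    ∩ Set.Icc (0:ℝ) 1)).toReal
              ≤ C * Real.log n / n})
          atTop (nhds 1) := by
  have hp1 : (0:ℝ) ≤ 1 - p := by linarith
  set s := Real.sqrt (p * (1 - p)) with hsdef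
  have hs0 : 0 ≤ s := Real.sqrt_nonneg _
  have hs2 : s ^ 2 = p * (1 - p) := Real.sq_sqrt (by nlinarith)
  have hθ0 : 0 < 1 - 2 * s := by
    nlinarith [mul_pos (show (0:ℝ) < 1 - 2*p by linarith) (show (0:ℝ) < 1 - 2*p by linarith)]
  refine ⟨2 / (1 - 2 * s), by positivity, fun c hc => ?_⟩
  have hc0 : 0 < c := lt_of_lt_of_le (by positivity) hc
  have hcθ : 2 ≤ c * (1 - 2 * s) := by
    rw [div_le_iff₀ hθ0] at hc; linarith
  refine ⟨(4 * (M:ℝ) + 2) * c, by positivity, ?_⟩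
  have hlow : Tendsto (fun n : ℕ => 1 - ENNReal.ofReal ((n:ℝ)⁻¹)) atTop (nhds 1) := by
    have h0 : Tendsto (fun n : ℕ => ENNReal.ofReal ((n:ℝ)⁻¹)) atTop (nhds 0) := by
      rw [← ENNReal.ofReal_zero]
      exact (ENNReal.continuous_ofReal.tendsto 0).comp tendsto_inv_atTop_nhds_zero_nat
    simpa using ENNReal.Tendsto.sub
      (tendsto_const_nhds : Tendsto (fun _ : ℕ => (1:ℝ≥0∞)) atTop (nhds 1)) h0
      (Or.inl ENNReal.one_ne_top)
  refine tendsto_of_tendsto_of_tendsto_of_le_of_le' hlow tendsto_const_nhds ?_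
    (Eventually.of_forall fun n => prob_le_one)
  have hlog : Tendsto (fun n : ℕ => Real.log n) atTop atTop :=
    Real.tendsto_log_atTop.comp tendsto_natCast_atTop_atTop
  have ev1 : ∀ᶠ n : ℕ in atTop, 1 ≤ c * Real.log n := by
    filter_upwards [hlog.eventually_ge_atTop (1 / c)] with n hn
    have h := mul_le_mul_of_nonneg_left hn hc0.le
    rwa [mul_one_div, div_self hc0.ne'] at h
  have ev2 : ∀ᶠ n : ℕ in atTop, c * Real.log n ≤ (n:ℝ) := by
    have h := (Asymptotics.isLittleO_iff.mp Real.isLittleO_log_id_atTop)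
      (show (0:ℝ) < 1 / c by positivity)
    filter_upwards [tendsto_natCast_atTop_atTop.eventually h] with n hn
    simp only [Real.norm_eq_abs, id_eq] at hn
    have hn0 : (0:ℝ) ≤ (n:ℝ) := Nat.cast_nonneg n
    have hlogle : Real.log n ≤ 1 / c * n := by
      calc Real.log n ≤ |Real.log n| := le_abs_self _
        _ ≤ 1 / c * |(n:ℝ)| := hn
        _ = 1 / c * n := by rw [abs_of_nonneg hn0]
    calc c * Real.log n ≤ c * (1 / c * n) := mul_le_mul_of_nonneg_left hlogle hc0.le
      _ = n := by field_simp
  filter_upwards [ev1, ev2, eventually_ge_atTop 2] with n h1 h2 hn2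
  have hn0 : (0:ℝ) < n := by
    have : (0:ℕ) < n := by omega
    exact_mod_cast this
  set ℓ := c * Real.log n / n with hℓdef
  have hℓ0 : 0 < ℓ := by rw [hℓdef]; exact div_pos (by linarith) hn0
  have hℓ1 : ℓ ≤ 1 := by rw [hℓdef, div_le_one hn0]; exact h2
  set K := ⌈(n:ℝ) / (c * Real.log n)⌉₊ with hKdef
  have hcL0 : 0 < c * Real.log n := by linarith
  have hK1 : 1 ≤ (K:ℝ) * ℓ := by
    have hle : (n:ℝ) / (c * Real.log n) ≤ (K:ℝ) := Nat.le_ceil _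
    have heq : ((n:ℝ) / (c * Real.log n)) * ℓ = 1 := by
      rw [hℓdef]; field_simp
      exact div_self (fun h => by rw [h, mul_zero] at hcL0; exact lt_irrefl _ hcL0)
    calc (1:ℝ) = ((n:ℝ) / (c * Real.log n)) * ℓ := heq.symm
      _ ≤ (K:ℝ) * ℓ := mul_le_mul_of_nonneg_right hle hℓ0.le
  have hKn : K ≤ n := by
    rw [hKdef]
    refine Nat.ceil_le.mpr ?_
    calc (n:ℝ) / (c * Real.log n) ≤ (n:ℝ) := div_le_self hn0.le h1
      _ = ((n:ℕ):ℝ) := rfl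
  -- bad events
  set badF : ℕ → Set Ω := fun k =>
    {ω | ((Finset.univ.filter fun i : Fin n =>
            X n i ω ∈ Set.Ico ((k:ℝ) * ℓ) (((k:ℝ) + 1) * ℓ) ∧ F n i ω = true).card
        > (Finset.univ.filter fun i : Fin n =>
            X n i ω ∈ Set.Ico ((k:ℝ) * ℓ) (((k:ℝ) + 1) * ℓ) ∧ ¬ (F n i ω = true)).card)}
    with hbadF
  set badset : Finset ℕ := (Finset.range K).filter
    (fun k => ((k:ℝ) + 1) * ℓ ≤ 1 ∧
      ∀ y ∈ Set.Ico ((k:ℝ) * ℓ) (((k:ℝ) + 1) * ℓ), ∀ j, ¬ |y - t j| ≤ ℓ) with hbadset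
  have hbadP : ∀ k ∈ badset, P (badF k) ≤ ENNReal.ofReal ((1 - ℓ * (1 - 2 * s)) ^ n) := by
    intro k hk
    rw [hbadset, Finset.mem_filter] at hk
    obtain ⟨hkK, hfull, hfar⟩ := hk
    have hq : ∀ i, P (X n i ⁻¹' Set.Ico ((k:ℝ) * ℓ) (((k:ℝ) + 1) * ℓ)) = ENNReal.ofReal ℓ := by
      intro i
      rw [← Measure.map_apply (hXmeas n i) measurableSet_Ico, hunif n i,
        Measure.restrict_apply measurableSet_Ico]
      have hsub : Set.Ico ((k:ℝ) * ℓ) (((k:ℝ) + 1) * ℓ) ∩ Set.Icc 0 1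
          = Set.Ico ((k:ℝ) * ℓ) (((k:ℝ) + 1) * ℓ) := by
        refine Set.inter_eq_left.mpr fun x hx => ?_
        have hk0 : (0:ℝ) ≤ (k:ℝ) * ℓ := mul_nonneg (Nat.cast_nonneg k) hℓ0.le
        exact ⟨le_trans hk0 hx.1, le_trans (le_of_lt hx.2) hfull⟩
      rw [hsub, Real.volume_Ico]
      congr 1
      ring
    have hcore := core_bound P (X n) (F n) (hXmeas n) (hFmeas n) p hp0 hp (hflip n) (hXF n)
      (hindep n) _ measurableSet_Ico ℓ hℓ0.le hℓ1 hq
    rw [← hsdef] at hcore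
    simp only [hbadF]
    convert hcore using 2
    congr!
  have hbound : P (⋃ k ∈ badset, badF k) ≤ ENNReal.ofReal ((n:ℝ)⁻¹) := by
    have hcard : badset.card ≤ K := by
      rw [hbadset]
      exact le_trans (Finset.card_filter_le _ _) (le_of_eq (Finset.card_range K))
    have hln0 : 0 ≤ Real.log n := Real.log_nonneg (by exact_mod_cast Nat.one_le_of_lt hn2)
    have hreal : (1 - ℓ * (1 - 2 * s)) ^ n ≤ ((n:ℝ) ^ 2)⁻¹ := by
      have h01 : 0 ≤ 1 - ℓ * (1 - 2 * s) := by nlinarith [hℓ1, hℓ0.le, hθ0, hs0]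
      have hexp : 1 - ℓ * (1 - 2 * s) ≤ Real.exp (-(ℓ * (1 - 2 * s))) := by
        have := Real.add_one_le_exp (-(ℓ * (1 - 2 * s))); linarith
      calc (1 - ℓ * (1 - 2 * s)) ^ n ≤ Real.exp (-(ℓ * (1 - 2 * s))) ^ n :=
            pow_le_pow_left₀ h01 hexp n
        _ = Real.exp ((n:ℝ) * (-(ℓ * (1 - 2 * s)))) := (Real.exp_nat_mul _ n).symm
        _ ≤ Real.exp (-(2 * Real.log n)) := by
            apply Real.exp_le_exp.mpr
            have heq : (n:ℝ) * (ℓ * (1 - 2 * s)) = (c * (1 - 2 * s)) * Real.log n := by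
              rw [hℓdef]; field_simp
            have h3 : 2 * Real.log n ≤ (c * (1 - 2 * s)) * Real.log n :=
              mul_le_mul_of_nonneg_right hcθ hln0
            linarith
        _ = ((n:ℝ) ^ 2)⁻¹ := by
            rw [Real.exp_neg]
            congr 1
            rw [show (2:ℝ) * Real.log n = Real.log n + Real.log n by ring, Real.exp_add,
              Real.exp_log hn0, sq]
    calc P (⋃ k ∈ badset, badF k) ≤ ∑ k ∈ badset, P (badF k) :=
          measure_biUnion_finset_le _ _
      _ ≤ ∑ k ∈ badset, ENNReal.ofReal ((1 - ℓ * (1 - 2 * s)) ^ n) := Finset.sum_le_sum hbadP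
      _ = badset.card • ENNReal.ofReal ((1 - ℓ * (1 - 2 * s)) ^ n) := Finset.sum_const _
      _ ≤ (n : ℝ≥0∞) * ENNReal.ofReal (((n:ℝ) ^ 2)⁻¹) := by
          rw [nsmul_eq_mul]
          exact mul_le_mul' (by exact_mod_cast le_trans hcard hKn)
            (ENNReal.ofReal_le_ofReal hreal)
      _ = ENNReal.ofReal ((n:ℝ) * ((n:ℝ) ^ 2)⁻¹) := by
          rw [ENNReal.ofReal_mul (Nat.cast_nonneg n), ENNReal.ofReal_natCast]
      _ = ENNReal.ofReal ((n:ℝ)⁻¹) := by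
          congr 1
          rw [sq]
          field_simp
  have main : ∀ A : Set Ω, (⋃ k ∈ badset, badF k)ᶜ ⊆ A →
      1 - ENNReal.ofReal ((n:ℝ)⁻¹) ≤ P A := by
    intro A hA
    rw [tsub_le_iff_right]
    calc (1:ℝ≥0∞) = P Set.univ := measure_univ.symm
      _ ≤ P ((⋃ k ∈ badset, badF k) ∪ A) := measure_mono (by
            intro ω _
            by_cases hω : ω ∈ ⋃ k ∈ badset, badF k
            · exact Or.inl hω
            · exact Or.inr (hA hω))
      _ ≤ P (⋃ k ∈ badset, badF k) + P A := measure_union_le _ _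
      _ ≤ ENNReal.ofReal ((n:ℝ)⁻¹) + P A := add_le_add_left hbound _
      _ = P A + ENNReal.ofReal ((n:ℝ)⁻¹) := add_comm _ _
  apply main
  intro ω hω
  have hgood : ∀ k ∈ badset, ω ∉ badF k := fun k hk hbad =>
    hω (Set.mem_iUnion₂.mpr ⟨k, hk, hbad⟩)
  simp only [Set.mem_setOf_eq]
  -- deterministic part
  have hOcc : ∀ k : ℕ, k < K → ((k:ℝ) + 1) * ℓ ≤ 1 →
      (∀ y ∈ Set.Ico ((k:ℝ) * ℓ) (((k:ℝ) + 1) * ℓ), ∀ j, ¬ |y - t j| ≤ ℓ) →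
      ¬ ((Finset.univ.filter fun i : Fin n =>
            X n i ω ∈ Set.Ico ((k:ℝ) * ℓ) (((k:ℝ) + 1) * ℓ) ∧
            Xor' (∃ j, |X n i ω - t j| ≤ ℓ) (F n i ω = true)).card
        > (Finset.univ.filter fun i : Fin n =>
            X n i ω ∈ Set.Ico ((k:ℝ) * ℓ) (((k:ℝ) + 1) * ℓ) ∧
            ¬ Xor' (∃ j, |X n i ω - t j| ≤ ℓ) (F n i ω = true)).card) := by
    intro k hkK hfull hfar
    have hxor : ∀ i : Fin n, X n i ω ∈ Set.Ico ((k:ℝ) * ℓ) (((k:ℝ) + 1) * ℓ) →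
        (Xor' (∃ j, |X n i ω - t j| ≤ ℓ) (F n i ω = true) ↔ F n i ω = true) := by
      intro i hi
      have hno : ¬ ∃ j, |X n i ω - t j| ≤ ℓ := fun ⟨j, hj⟩ => hfar _ hi j hj
      simp [Xor', hno]
    have h1eq : (Finset.univ.filter fun i : Fin n =>
        X n i ω ∈ Set.Ico ((k:ℝ) * ℓ) (((k:ℝ) + 1) * ℓ) ∧
        Xor' (∃ j, |X n i ω - t j| ≤ ℓ) (F n i ω = true))
        = (Finset.univ.filter fun i : Fin n =>
        X n i ω ∈ Set.Ico ((k:ℝ) * ℓ) (((k:ℝ) + 1) * ℓ) ∧ F n i ω = true) :=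
      Finset.filter_congr fun i _ => and_congr_right fun hx => hxor i hx
    have h2eq : (Finset.univ.filter fun i : Fin n =>
        X n i ω ∈ Set.Ico ((k:ℝ) * ℓ) (((k:ℝ) + 1) * ℓ) ∧
        ¬ Xor' (∃ j, |X n i ω - t j| ≤ ℓ) (F n i ω = true))
        = (Finset.univ.filter fun i : Fin n =>
        X n i ω ∈ Set.Ico ((k:ℝ) * ℓ) (((k:ℝ) + 1) * ℓ) ∧ ¬ (F n i ω = true)) :=
      Finset.filter_congr fun i _ => and_congr_right fun hx => not_congr (hxor i hx)
    intro hcon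
    rw [h1eq, h2eq] at hcon
    refine hgood k ?_ ?_
    · rw [hbadset, Finset.mem_filter]
      exact ⟨Finset.mem_range.mpr hkK, hfull, hfar⟩
    · simp only [hbadF, Set.mem_setOf_eq]
      exact hcon
  set badk : Set ℕ := {k : ℕ | k < K ∧
      ¬ ((Finset.univ.filter fun i : Fin n =>
            X n i ω ∈ Set.Ico ((k:ℝ) * ℓ) (((k:ℝ) + 1) * ℓ) ∧
            Xor' (∃ j, |X n i ω - t j| ≤ ℓ) (F n i ω = true)).card
        > (Finset.univ.filter fun i : Fin n =>
            X n i ω ∈ Set.Ico ((k:ℝ) * ℓ) (((k:ℝ) + 1) * ℓ) ∧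
            ¬ Xor' (∃ j, |X n i ω - t j| ≤ ℓ) (F n i ω = true)).card)} with hbadk
  set U := ⋃ k ∈ badk, Set.Ico ((k:ℝ) * ℓ) (((k:ℝ) + 1) * ℓ) ∩ Set.Icc (0:ℝ) 1 with hU
  have hcov : Set.Icc (0:ℝ) 1 ⊆
      U ∪ ((⋃ j, Set.Icc (t j - 2*ℓ) (t j + 2*ℓ)) ∪ Set.Ioc (1-ℓ) 1) := by
    intro x hx
    obtain ⟨hx0, hx1⟩ := hx
    by_cases hxl : 1 - ℓ < x
    · exact Or.inr (Or.inr ⟨hxl, hx1⟩)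
    push_neg at hxl
    set k := ⌊x / ℓ⌋₊ with hkdef
    have hkx : (k:ℝ) * ℓ ≤ x := by
      calc (k:ℝ) * ℓ ≤ (x / ℓ) * ℓ :=
            mul_le_mul_of_nonneg_right (Nat.floor_le (div_nonneg hx0 hℓ0.le)) hℓ0.le
        _ = x := div_mul_cancel₀ x hℓ0.ne'
    have hxk : x < ((k:ℝ) + 1) * ℓ := by
      calc x = (x / ℓ) * ℓ := (div_mul_cancel₀ x hℓ0.ne').symm
        _ < ((k:ℝ) + 1) * ℓ := mul_lt_mul_of_pos_right (Nat.lt_floor_add_one _) hℓ0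
    have hkl : ((k:ℝ) + 1) * ℓ = (k:ℝ) * ℓ + ℓ := by ring
    have hfull : ((k:ℝ) + 1) * ℓ ≤ 1 := by linarith
    have hkK : k < K := by
      by_contra hcon
      push_neg at hcon
      have hKk : (K:ℝ) ≤ (k:ℝ) := Nat.cast_le.mpr hcon
      have h4 : (K:ℝ) * ℓ ≤ (k:ℝ) * ℓ := mul_le_mul_of_nonneg_right hKk hℓ0.le
      linarith
    by_cases hocc : ((Finset.univ.filter fun i : Fin n =>
            X n i ω ∈ Set.Ico ((k:ℝ) * ℓ) (((k:ℝ) + 1) * ℓ) ∧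
            Xor' (∃ j, |X n i ω - t j| ≤ ℓ) (F n i ω = true)).card
        > (Finset.univ.filter fun i : Fin n =>
            X n i ω ∈ Set.Ico ((k:ℝ) * ℓ) (((k:ℝ) + 1) * ℓ) ∧
            ¬ Xor' (∃ j, |X n i ω - t j| ≤ ℓ) (F n i ω = true)).card)
    · by_cases hfar : ∀ y ∈ Set.Ico ((k:ℝ) * ℓ) (((k:ℝ) + 1) * ℓ), ∀ j, ¬ |y - t j| ≤ ℓ
      · exact absurd hocc (hOcc k hkK hfull hfar)
      · push_neg at hfar
        obtain ⟨y, hy, j, hj⟩ := hfar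
        rw [abs_le] at hj
        obtain ⟨hy1, hy2⟩ := hy
        refine Or.inr (Or.inl (Set.mem_iUnion.mpr ⟨j, Set.mem_Icc.mpr ⟨?_, ?_⟩⟩))
        · linarith [hj.1, hj.2]
        · linarith [hj.1, hj.2]
    · exact Or.inl (Set.mem_iUnion₂.mpr ⟨k, ⟨hkK, hocc⟩, ⟨⟨hkx, hxk⟩, hx0, hx1⟩⟩)
  have hcover_vol : volume ((⋃ j, Set.Icc (t j - 2*ℓ) (t j + 2*ℓ)) ∪ Set.Ioc (1-ℓ) 1)
      ≤ ENNReal.ofReal ((4 * (M:ℝ) + 1) * ℓ) := by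
    calc volume ((⋃ j, Set.Icc (t j - 2*ℓ) (t j + 2*ℓ)) ∪ Set.Ioc (1-ℓ) 1)
        ≤ volume (⋃ j, Set.Icc (t j - 2*ℓ) (t j + 2*ℓ)) + volume (Set.Ioc (1-ℓ) 1) :=
          measure_union_le _ _
      _ ≤ (∑ j : Fin M, volume (Set.Icc (t j - 2*ℓ) (t j + 2*ℓ))) + volume (Set.Ioc (1-ℓ) 1) :=
          add_le_add_left (measure_iUnion_fintype_le _ _) _
      _ = (∑ _j : Fin M, ENNReal.ofReal (4*ℓ)) + ENNReal.ofReal ℓ := by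
          rw [Real.volume_Ioc]
          congr 1
          · refine Finset.sum_congr rfl fun j _ => ?_
            rw [Real.volume_Icc]
            congr 1
            ring
          · congr 1
            ring
      _ = ENNReal.ofReal ((4 * (M:ℝ) + 1) * ℓ) := by
          rw [Finset.sum_const, Finset.card_univ, Fintype.card_fin, nsmul_eq_mul,
            ← ENNReal.ofReal_natCast M, ← ENNReal.ofReal_mul (Nat.cast_nonneg M),
            ← ENNReal.ofReal_add (mul_nonneg (Nat.cast_nonneg M) (by linarith)) hℓ0.le]
          congr 1
          ring
  have hvol : (1:ℝ≥0∞) ≤ volume U + ENNReal.ofReal ((4 * (M:ℝ) + 1) * ℓ) := by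
    calc (1:ℝ≥0∞) = volume (Set.Icc (0:ℝ) 1) := by rw [Real.volume_Icc]; norm_num
      _ ≤ volume (U ∪ ((⋃ j, Set.Icc (t j - 2*ℓ) (t j + 2*ℓ)) ∪ Set.Ioc (1-ℓ) 1)) :=
          measure_mono hcov
      _ ≤ volume U + volume ((⋃ j, Set.Icc (t j - 2*ℓ) (t j + 2*ℓ)) ∪ Set.Ioc (1-ℓ) 1) :=
          measure_union_le _ _
      _ ≤ volume U + ENNReal.ofReal ((4 * (M:ℝ) + 1) * ℓ) := add_le_add_right hcover_vol _
  have hUsub : U ⊆ Set.Icc (0:ℝ) 1 := by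
    rw [hU]
    exact Set.iUnion₂_subset fun k _ => Set.inter_subset_right
  have hUle : volume U ≤ 1 := by
    calc volume U ≤ volume (Set.Icc (0:ℝ) 1) := measure_mono hUsub
      _ = 1 := by rw [Real.volume_Icc]; norm_num
  have hfin : volume U ≠ ⊤ := (lt_of_le_of_lt hUle (by norm_num)).ne
  have htoreal : (1:ℝ) ≤ (volume U).toReal + (4 * (M:ℝ) + 1) * ℓ := by
    have hne : volume U + ENNReal.ofReal ((4 * (M:ℝ) + 1) * ℓ) ≠ ⊤ :=
      ENNReal.add_ne_top.mpr ⟨hfin, ENNReal.ofReal_ne_top⟩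
    have h := ENNReal.toReal_mono hne hvol
    rwa [ENNReal.toReal_one, ENNReal.toReal_add hfin ENNReal.ofReal_ne_top,
      ENNReal.toReal_ofReal (mul_nonneg (by positivity) hℓ0.le)] at h
  have hfinal : (4 * (M:ℝ) + 1) * ℓ ≤ (4 * (M:ℝ) + 2) * c * Real.log n / n := by
    have heq : (4 * (M:ℝ) + 2) * c * Real.log n / n = (4 * (M:ℝ) + 2) * ℓ := by
      rw [hℓdef]; ring
    rw [heq]
    nlinarith [hℓ0.le]
  have hdone : 1 - (volume U).toReal ≤ (4 * (M:ℝ) + 2) * c * Real.log n / n := by linarith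
  exact hdone
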